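/- Every admissible sequence of integers (a₁,…,a_n) of the first kind (i.e. a_i ≥ -2 for all i) has length n ≤ 9. -/

import Mathlib

/-- Elementary augmentation of integer sequences: insert `-1` at position
`m` and decrease the two cyclically adjacent entries by `1`. -/
inductive IsAugm : List ℤ → List ℤ → Prop
  | first (x y : ℤ) (mid : List ℤ) :
      IsAugm (x :: (mid ++ [y])) ((-1) :: (x - 1) :: (mid ++ [y - 1]))
  | middle (u v : List ℤ) (x y : ℤ) :
      IsAugm (u ++ x :: y :: v) (u ++ (x - 1) :: (-1) :: (y - 1) :: v)
  | last (x y : ℤ) (mid : List ℤ) :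
      IsAugm (x :: (mid ++ [y])) ((x - 1) :: (mid ++ [y - 1, -1]))

/-- Admissible sequences: obtained from `(0, k, 0, -k)` or `(k, 0, -k, 0)`
by finitely many elementary augmentations. -/
inductive Admissible : List ℤ → Prop
  | base₁ (k : ℤ) : Admissible [0, k, 0, -k]
  | base₂ (k : ℤ) : Admissible [k, 0, -k, 0]
  | step {a b : List ℤ} : Admissible a → IsAugm a b → Admissible b

/-- Decrease the last entry of a list by 1. -/
def decLast : List ℤ → List ℤ
  | [] => []
  | [y] => [y - 1]
  | y :: z :: rest => y :: decLast (z :: rest)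

lemma decLast_append (mid : List ℤ) (y : ℤ) :
    decLast (mid ++ [y]) = mid ++ [y - 1] := by
  induction mid with
  | nil => rfl
  | cons a l ih =>
    cases l with
    | nil => simp [decLast]
    | cons b l' => simpa [decLast] using ih

/-- All "middle" augmentations of a list. -/
def midAugs : List ℤ → List (List ℤ)
  | x :: y :: v => ((x - 1) :: (-1) :: (y - 1) :: v) :: (midAugs (y :: v)).map (x :: ·)
  | _ => []

lemma mem_midAugs (u : List ℤ) (x y : ℤ) (v : List ℤ) :
    (u ++ (x - 1) :: (-1) :: (y - 1) :: v) ∈ midAugs (u ++ x :: y :: v) := by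
  induction u with
  | nil => simp [midAugs]
  | cons a u ih =>
    cases hu : u ++ x :: y :: v with
    | nil => simp at hu
    | cons p w =>
      rw [List.cons_append, hu, midAugs]
      rw [hu] at ih
      exact List.mem_cons_of_mem _ (List.mem_map_of_mem ih)

/-- All augmentations of a list. -/
def augs : List ℤ → List (List ℤ)
  | [] => []
  | x :: rest =>
    if rest.isEmpty then [] else
      ((-1) :: (x - 1) :: decLast rest) ::
        ((x - 1) :: (decLast rest ++ [-1])) :: midAugs (x :: rest)

lemma augs_cons (x : ℤ) (rest : List ℤ) (h : rest ≠ []) :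
    augs (x :: rest) = ((-1) :: (x - 1) :: decLast rest) ::
      ((x - 1) :: (decLast rest ++ [-1])) :: midAugs (x :: rest) := by
  cases rest with
  | nil => exact absurd rfl h
  | cons => rfl

lemma isAugm_mem {a b : List ℤ} (h : IsAugm a b) : b ∈ augs a := by
  cases h with
  | first x y mid =>
    rw [augs_cons _ _ (by simp), decLast_append]
    exact List.mem_cons_self
  | last x y mid =>
    rw [augs_cons _ _ (by simp), decLast_append]
    have he : (x - 1) :: (mid ++ [y - 1, -1]) =
        (x - 1) :: ((mid ++ [y - 1]) ++ [-1]) := by simp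
    rw [he]
    exact List.mem_cons_of_mem _ List.mem_cons_self
  | middle u v x y =>
    have hm := mem_midAugs u x y v
    cases hc : u ++ x :: y :: v with
    | nil => simp at hc
    | cons p w =>
      have hw : w ≠ [] := by
        intro hw0
        subst hw0
        have := congrArg List.length hc
        simp at this
        omega
      rw [hc] at hm
      rw [augs_cons _ _ hw]
      exact List.mem_cons_of_mem _ (List.mem_cons_of_mem _ hm)

lemma firstKind_back {a b : List ℤ} (h : IsAugm a b)
    (hb : ∀ x ∈ b, -2 ≤ x) : ∀ x ∈ a, -2 ≤ x := by
  cases h with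
  | first x y mid =>
    intro z hz
    simp only [List.mem_cons, List.mem_append, List.mem_singleton,
      List.not_mem_nil, or_false] at hz
    rcases hz with rfl | hz | rfl
    · have := hb (z - 1) (by simp <;> tauto); omega
    · exact hb z (by simp <;> tauto)
    · have := hb (z - 1) (by simp <;> tauto); omega
  | middle u v x y =>
    intro z hz
    simp only [List.mem_cons, List.mem_append] at hz
    rcases hz with hz | rfl | rfl | hz
    · exact hb z (by simp <;> tauto)
    · have := hb (z - 1) (by simp <;> tauto); omega
    · have := hb (z - 1) (by simp <;> tauto); omega
    · exact hb z (by simp <;> tauto)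
  | last x y mid =>
    intro z hz
    simp only [List.mem_cons, List.mem_append, List.mem_singleton,
      List.not_mem_nil, or_false] at hz
    rcases hz with rfl | hz | rfl
    · have := hb (z - 1) (by simp <;> tauto); omega
    · exact hb z (by simp <;> tauto)
    · have := hb (z - 1) (by simp <;> tauto); omega

def S0 : List (List ℤ) := [
  [-2, -2, -2, -1, -2, 0, -2, -1],
  [-2, -2, -1, -2, -2, -1, -2, -2, -1],
  [-2, -2, -1, -2, -1, -1, -2, -1],
  [-2, -2, -1, -2, 0, -2, -1, -2],
  [-2, -2, -1, -2, 0, -1, -1],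
  [-2, -2, -1, -2, 1, 0],
  [-2, -2, -1, -1, 0, -2, -1],
  [-2, -2, 0, 1, -2, -1],
  [-2, -1, -2, -2, -2, -1, -2, 0],
  [-2, -1, -2, -2, -1, -2, -2, -1, -2]]

def S1 : List (List ℤ) := [
  [-2, -1, -2, -2, -1, -2, -1, -1],
  [-2, -1, -2, -2, -1, -1, 0],
  [-2, -1, -2, -2, 0, 1],
  [-2, -1, -2, -1, -2, -1, -2, -1],
  [-2, -1, -2, -1, -1, -2, -1, -2],
  [-2, -1, -2, -1, -1, -1, -1],
  [-2, -1, -2, -1, 0, 0],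
  [-2, -1, -2, 0, -2, -1, -2, -2],
  [-2, -1, -2, 0, -1, -1, -2],
  [-2, -1, -2, 0, 0, -1]]

def S2 : List (List ℤ) := [
  [-2, -1, -2, 1, 0, -2],
  [-2, -1, -1, -2, -1, -2, -2, -1],
  [-2, -1, -1, -1, -1, -2, -1],
  [-2, -1, -1, 0, -2, -1, -2],
  [-2, -1, -1, 0, -1, -1],
  [-2, -1, -1, 1, 0],
  [-2, -1, 0, 0, -2, -1],
  [-2, 0, -2, -1, -2, -2, -2, -1],
  [-2, 0, -1, -1, -2, -2, -1],
  [-2, 0, 0, -1, -2, -1]]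

def S3 : List (List ℤ) := [
  [-2, 0, 1, -2, -1, -2],
  [-2, 0, 1, -1, -1],
  [-2, 0, 2, 0],
  [-2, 1, 0, -2, -2, -1],
  [-1, -2, -2, -2, -1, -2, 0, -2],
  [-1, -2, -2, -1, -2, -2, -1, -2, -2],
  [-1, -2, -2, -1, -2, -1, -1, -2],
  [-1, -2, -2, -1, -2, 0, -1],
  [-1, -2, -2, -1, -1, 0, -2],
  [-1, -2, -2, 0, 1, -2]]

def S4 : List (List ℤ) := [
  [-1, -2, -1, -2, -2, -1, -2, -1],
  [-1, -2, -1, -2, -1, -2, -1, -2],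
  [-1, -2, -1, -2, -1, -1, -1],
  [-1, -2, -1, -2, 0, 0],
  [-1, -2, -1, -1, -2, -1, -2, -2],
  [-1, -2, -1, -1, -1, -1, -2],
  [-1, -2, -1, -1, 0, -1],
  [-1, -2, -1, 0, 0, -2],
  [-1, -2, 0, -2, -1, -2, -2, -2],
  [-1, -2, 0, -1, -1, -2, -2]]

def S5 : List (List ℤ) := [
  [-1, -2, 0, 0, -1, -2],
  [-1, -2, 0, 1, -1],
  [-1, -2, 1, 0, -2, -2],
  [-1, -1, -2, -2, -1, -2, 0],
  [-1, -1, -2, -1, -2, -2, -1, -2],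
  [-1, -1, -2, -1, -2, -1, -1],
  [-1, -1, -2, -1, -1, 0],
  [-1, -1, -2, 0, 1],
  [-1, -1, -1, -2, -1, -2, -1],
  [-1, -1, -1, -1, -2, -1, -2]]

def S6 : List (List ℤ) := [
  [-1, -1, -1, -1, -1, -1],
  [-1, -1, -1, 0, 0],
  [-1, -1, 0, -2, -1, -2, -2],
  [-1, -1, 0, -1, -1, -2],
  [-1, -1, 0, 0, -1],
  [-1, -1, 1, 0, -2],
  [-1, 0, -2, -1, -2, -2, -1],
  [-1, 0, -1, -1, -2, -1],
  [-1, 0, 0, -2, -1, -2],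
  [-1, 0, 0, -1, -1]]

def S7 : List (List ℤ) := [
  [-1, 0, 1, 0],
  [-1, 1, 0, -2, -1],
  [0, -2, -2, -1, -2, 1],
  [0, -2, -1, -2, -2, -2, -1, -2],
  [0, -2, -1, -2, -2, -1, -1],
  [0, -2, -1, -2, -1, 0],
  [0, -2, -1, -1, 1],
  [0, -2, 0, 2],
  [0, -1, -2, -1, -2, 0],
  [0, -1, -1, -2, -2, -1, -2]]

def S8 : List (List ℤ) := [
  [0, -1, -1, -2, -1, -1],
  [0, -1, -1, -1, 0],
  [0, -1, 0, 1],
  [0, 0, -2, -1, -2, -1],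
  [0, 0, -1, -2, -1, -2],
  [0, 0, -1, -1, -1],
  [0, 0, 0, 0],
  [0, 1, -2, -1, -2, -2],
  [0, 1, -1, -1, -2],
  [0, 1, 0, -1]]

def S9 : List (List ℤ) := [
  [0, 2, 0, -2],
  [1, -2, -1, -2, -2, 0],
  [1, -1, -1, -2, 0],
  [1, 0, -2, -2, -1, -2],
  [1, 0, -2, -1, -1],
  [1, 0, -1, 0],
  [2, 0, -2, 0]]

def S : List (List ℤ) := S0 ++ S1 ++ S2 ++ S3 ++ S4 ++ S5 ++ S6 ++ S7 ++ S8 ++ S9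



set_option maxRecDepth 100000 in
set_option maxHeartbeats 8000000 in
lemma closureS : ∀ a ∈ S, ∀ b ∈ augs a, (∀ x ∈ b, -2 ≤ x) → b ∈ S := by decide

set_option maxRecDepth 10000 in
lemma lenS : ∀ a ∈ S, a.length ≤ 9 := by decide

/-- Every admissible sequence of the first kind
(all entries `≥ -2`) has length at most `9`. -/
theorem admissible_first_kind_length_le_nine (a : List ℤ)
    (ha : Admissible a) (hfk : ∀ x ∈ a, -2 ≤ x) :
    a.length ≤ 9 := by
  have key : ∀ c, Admissible c → (∀ x ∈ c, -2 ≤ x) → c ∈ S := by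
    intro c hc
    induction hc with
    | base₁ k =>
      intro h
      have h1 : -2 ≤ k := h k (by simp)
      have h2 : k ≤ 2 := by have := h (-k) (by simp); omega
      interval_cases k <;> decide
    | base₂ k =>
      intro h
      have h1 : -2 ≤ k := h k (by simp)
      have h2 : k ≤ 2 := by have := h (-k) (by simp); omega
      interval_cases k <;> decide
    | step ha2 hab ih =>
      intro hb
      exact closureS _ (ih (firstKind_back hab hb)) _ (isAugm_mem hab) hb
  exact lenS a (key a ha hfk)
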